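/- For every good type τ there is exactly one construction scheme over ω of type τ; moreover this scheme contains {m_k : k ∈ ω} (i.e., each initial segment m_k of ω is a member of the scheme). -/
import Mathlib


/-- A type `τ = ⟨m_k, n_{k+1}, r_{k+1}⟩` of a construction scheme. -/
structure SchemeType where
  m : ℕ → ℕ
  n : ℕ → ℕ
  r : ℕ → ℕ
  m_zero : m 0 = 1
  two_le_n : ∀ k : ℕ, 2 ≤ n (k + 1)
  r_lt_m : ∀ k : ℕ, r (k + 1) < m k
  m_succ : ∀ k : ℕ, m (k + 1) = r (k + 1) + (m k - r (k + 1)) * n (k + 1)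

/-- The `k`-th level of the family `𝓕`: its members of cardinality `m_k`. -/
def Level (τ : SchemeType) (𝓕 : Set (Finset Ordinal)) (k : ℕ) : Set (Finset Ordinal) :=
  {F | F ∈ 𝓕 ∧ F.card = τ.m k}

/-- `𝓕` is a construction scheme over `X` of type `τ`: a cofinal family of nonempty
finite subsets of `X` such that members of level `k` have size `m_k`, intersections of
two level-`k` members are initial segments of both, and every level-`(k+1)` member is
the union of a root-tail-tail Δ-system of `n_{k+1}` level-`k` members whose root has
size `r_{k+1}`. -/
def IsConstructionScheme (τ : SchemeType) (X : Set Ordinal)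
    (𝓕 : Set (Finset Ordinal)) : Prop :=
  (∀ F ∈ 𝓕, F.Nonempty ∧ ↑F ⊆ X ∧ ∃ k, F.card = τ.m k) ∧
  (∀ A : Finset Ordinal, ↑A ⊆ X → ∃ F ∈ 𝓕, A ⊆ F) ∧
  (∀ k : ℕ, ∀ E ∈ Level τ 𝓕 k, ∀ F ∈ Level τ 𝓕 k,
    (∀ b ∈ E, ∀ a ∈ E ∩ F, b ≤ a → b ∈ E ∩ F) ∧
    (∀ b ∈ F, ∀ a ∈ E ∩ F, b ≤ a → b ∈ E ∩ F)) ∧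
  (∀ k : ℕ, ∀ F ∈ Level τ 𝓕 (k + 1),
    ∃ Fi : Fin (τ.n (k + 1)) → Finset Ordinal, ∃ R : Finset Ordinal,
      (∀ i, Fi i ∈ Level τ 𝓕 k) ∧
      ((↑F : Set Ordinal) = ⋃ i, ↑(Fi i)) ∧
      R.card = τ.r (k + 1) ∧
      (∀ i j, i ≠ j → Fi i ∩ Fi j = R) ∧
      (∀ i, ∀ a ∈ R, ∀ b ∈ Fi i, b ∉ R → a < b) ∧
      (∀ i j : Fin (τ.n (k + 1)), i < j →
        ∀ a ∈ Fi i, a ∉ R → ∀ b ∈ Fi j, b ∉ R → a < b))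

/-- The metric induced by a construction scheme:
`ρ(α,β) = min {k : ∃ F ∈ 𝓕_k, α, β ∈ F}`. -/
noncomputable def schemeRho (τ : SchemeType) (𝓕 : Set (Finset Ordinal))
    (α β : Ordinal) : ℕ :=
  sInf {k : ℕ | ∃ F ∈ Level τ 𝓕 k, α ∈ F ∧ β ∈ F}

/-- `τ` is good: every `r ∈ ω` occurs as `r_k` for infinitely many `k`. -/
def GoodType (τ : SchemeType) : Prop :=
  ∀ c N : ℕ, ∃ k, N ≤ k ∧ τ.r (k + 1) = c

namespace UniqueScheme
open Finset

variable (τ : SchemeType)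

lemma m_lt_m_succ (k : ℕ) : τ.m k < τ.m (k+1) := by
  have h1 := τ.r_lt_m k
  have h2 := τ.two_le_n k
  have h3 := τ.m_succ k
  have h4 : (τ.m k - τ.r (k+1)) * 2 ≤ (τ.m k - τ.r (k+1)) * τ.n (k+1) :=
    Nat.mul_le_mul_left _ h2
  omega

lemma m_strictMono : StrictMono τ.m := strictMono_nat_of_lt_succ (m_lt_m_succ τ)

lemma lt_m (k : ℕ) : k < τ.m k := by
  induction k with
  | zero => simp [τ.m_zero]
  | succ k ih => have := m_lt_m_succ τ k; omega

lemma m_pos (k : ℕ) : 0 < τ.m k := lt_of_le_of_lt (Nat.zero_le k) (lt_m τ k)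

lemma m_inj {k l : ℕ} (h : τ.m k = τ.m l) : k = l := (m_strictMono τ).injective h

lemma m_le_iff {k l : ℕ} : τ.m k ≤ τ.m l ↔ k ≤ l := (m_strictMono τ).le_iff_le

/-- The embedding of the `i`-th level-`k` piece into a level-`(k+1)` pattern. -/
def emb (k i x : ℕ) : ℕ :=
  if x < τ.r (k+1) then x else i * (τ.m k - τ.r (k+1)) + x

lemma emb_of_lt {k i x : ℕ} (h : x < τ.r (k+1)) : emb τ k i x = x := if_pos h

lemma emb_of_ge {k i x : ℕ} (h : τ.r (k+1) ≤ x) :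
    emb τ k i x = i * (τ.m k - τ.r (k+1)) + x := if_neg (by omega)

lemma emb_zero (k x : ℕ) : emb τ k 0 x = x := by
  unfold emb; split <;> omega

lemma emb_strictMono (k i : ℕ) : StrictMono (emb τ k i) := by
  intro x y hxy
  unfold emb
  split_ifs <;> omega

lemma emb_injective (k i : ℕ) : Function.Injective (emb τ k i) :=
  (emb_strictMono τ k i).injective

lemma emb_lt_r_iff {k i x : ℕ} : emb τ k i x < τ.r (k+1) ↔ x < τ.r (k+1) := by
  unfold emb; split <;> omega

/-- basic block bound -/
lemma emb_mem_block {k i x : ℕ} (h1 : τ.r (k+1) ≤ x) (h2 : x < τ.m k) :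
    τ.r (k+1) + i * (τ.m k - τ.r (k+1)) ≤ emb τ k i x ∧
    emb τ k i x < τ.r (k+1) + (i+1) * (τ.m k - τ.r (k+1)) := by
  rw [emb_of_ge τ h1]
  have := τ.r_lt_m k
  have h3 : (i+1) * (τ.m k - τ.r (k+1)) = i * (τ.m k - τ.r (k+1)) + (τ.m k - τ.r (k+1)) := by
    rw [Nat.add_mul]; omega
  omega

lemma emb_lt_m_succ {k i x : ℕ} (hi : i < τ.n (k+1)) (hx : x < τ.m k) :
    emb τ k i x < τ.m (k+1) := by
  have hms := τ.m_succ k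
  have hr := τ.r_lt_m k
  rcases lt_or_ge x (τ.r (k+1)) with h | h
  · rw [emb_of_lt τ h]; omega
  · have hb := (emb_mem_block τ (i := i) h hx).2
    have h4 : (i+1) * (τ.m k - τ.r (k+1)) ≤ τ.n (k+1) * (τ.m k - τ.r (k+1)) :=
      Nat.mul_le_mul_right _ hi
    have h5 : τ.n (k+1) * (τ.m k - τ.r (k+1)) = (τ.m k - τ.r (k+1)) * τ.n (k+1) :=
      Nat.mul_comm _ _
    omega

/-- blocks with distinct indices are disjoint and ordered -/
lemma emb_block_lt {k i j x y : ℕ} (hij : i < j) (h1 : τ.r (k+1) ≤ x) (h2 : x < τ.m k)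
    (h3 : τ.r (k+1) ≤ y) : emb τ k i x < emb τ k j y := by
  have hb := (emb_mem_block τ (i := i) h1 h2).2
  rw [emb_of_ge τ h3]
  have h4 : (i+1) * (τ.m k - τ.r (k+1)) ≤ j * (τ.m k - τ.r (k+1)) :=
    Nat.mul_le_mul_right _ hij
  omega

lemma emb_inter_aux {k i j x y : ℕ} (hij : i ≠ j) (hx : x < τ.m k) (hy : y < τ.m k)
    (h : emb τ k i x = emb τ k j y) : x < τ.r (k+1) ∧ x = y := by
  have hxr : x < τ.r (k+1) := by
    by_contra hxr
    push_neg at hxr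
    have hyr : τ.r (k+1) ≤ y := by
      by_contra hyr
      push_neg at hyr
      rw [emb_of_lt τ hyr] at h
      have := (emb_mem_block τ (i := i) hxr hx).1
      omega
    rcases Nat.lt_or_ge i j with hlt | hge
    · exact absurd h (Nat.ne_of_lt (emb_block_lt τ hlt hxr hx hyr))
    · have : j < i := by omega
      exact absurd h.symm (Nat.ne_of_lt (emb_block_lt τ this hyr hy hxr))
  refine ⟨hxr, ?_⟩
  rw [emb_of_lt τ hxr] at h
  have hyr : y < τ.r (k+1) := by
    by_contra hyr
    push_neg at hyr
    have := (emb_mem_block τ (i := j) hyr hy).1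
    have := τ.r_lt_m k
    omega
  rw [emb_of_lt τ hyr] at h
  omega

/-- covering: every point below `m (k+1)` is in some block image -/
lemma emb_cover {k x : ℕ} (hx : x < τ.m (k+1)) :
    ∃ i < τ.n (k+1), ∃ y < τ.m k, x = emb τ k i y := by
  have hms := τ.m_succ k
  have hr := τ.r_lt_m k
  have hn := τ.two_le_n k
  rcases lt_or_ge x (τ.r (k+1)) with h | h
  · exact ⟨0, by omega, x, by omega, (emb_of_lt τ h).symm⟩
  · -- x ∈ [r, r + s*n), find block by induction on n
    have key : ∀ N x, τ.r (k+1) ≤ x → x < τ.r (k+1) + (τ.m k - τ.r (k+1)) * N →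
        ∃ i < N, ∃ y, τ.r (k+1) ≤ y ∧ y < τ.m k ∧ x = i * (τ.m k - τ.r (k+1)) + y := by
      intro N
      induction N with
      | zero => intro x h1 h2; omega
      | succ N ih =>
        intro x h1 h2
        rcases lt_or_ge x (τ.r (k+1) + (τ.m k - τ.r (k+1)) * N) with hc | hc
        · obtain ⟨i, hi, y, hy⟩ := ih x h1 hc
          exact ⟨i, by omega, y, hy⟩
        · refine ⟨N, by omega, x - N * (τ.m k - τ.r (k+1)), ?_, ?_, ?_⟩ <;>
          · have hc2 : (τ.m k - τ.r (k+1)) * (N+1) = (τ.m k - τ.r (k+1)) * N + (τ.m k - τ.r (k+1)) := by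
              rw [Nat.mul_add]; omega
            have hc3 : N * (τ.m k - τ.r (k+1)) = (τ.m k - τ.r (k+1)) * N := Nat.mul_comm _ _
            omega
    obtain ⟨i, hi, y, hy1, hy2, hy3⟩ := key (τ.n (k+1)) x h (by omega)
    exact ⟨i, hi, y, hy2, by rw [emb_of_ge τ hy1]; omega⟩


/-- canonical level-`k` members sitting inside the initial segment `m (k+d)` -/
def Mem (k : ℕ) : ℕ → Set (Finset ℕ)
  | 0 => {Finset.range (τ.m k)}
  | (d+1) => {F | ∃ i < τ.n (k+d+1), ∃ S ∈ Mem k d, F = S.image (emb τ (k+d) i)}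

lemma range_mem (k : ℕ) : Finset.range (τ.m k) ∈ Mem τ k 0 := rfl

lemma Mem_card {k d : ℕ} {S : Finset ℕ} (h : S ∈ Mem τ k d) : S.card = τ.m k := by
  induction d generalizing S with
  | zero => rw [show S = Finset.range (τ.m k) from h]; exact Finset.card_range _
  | succ d ih =>
    obtain ⟨i, hi, T, hT, rfl⟩ := h
    rw [Finset.card_image_of_injective _ (emb_injective τ _ i)]
    exact ih hT

lemma Mem_subset_range {k d : ℕ} {S : Finset ℕ} (h : S ∈ Mem τ k d) :
    S ⊆ Finset.range (τ.m (k+d)) := by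
  induction d generalizing S with
  | zero => rw [show S = Finset.range (τ.m k) from h]; exact Finset.Subset.refl _
  | succ d ih =>
    obtain ⟨i, hi, T, hT, rfl⟩ := h
    intro x hx
    rw [Finset.mem_image] at hx
    obtain ⟨y, hy, rfl⟩ := hx
    have := ih hT hy
    rw [Finset.mem_range] at *
    exact emb_lt_m_succ τ hi this

lemma Mem_mono_d {k d : ℕ} {S : Finset ℕ} (h : S ∈ Mem τ k d) : S ∈ Mem τ k (d+1) := by
  refine ⟨0, by have := τ.two_le_n (k+d); omega, S, h, ?_⟩
  ext x
  simp only [Finset.mem_image]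
  constructor
  · intro hx; exact ⟨x, hx, emb_zero τ _ x⟩
  · rintro ⟨y, hy, rfl⟩; rwa [emb_zero τ]

lemma Mem_mono_d' {k d d' : ℕ} (hd : d ≤ d') {S : Finset ℕ} (h : S ∈ Mem τ k d) :
    S ∈ Mem τ k d' := by
  induction d' with
  | zero => rwa [Nat.le_zero.mp hd] at h
  | succ d' ih =>
    rcases Nat.lt_or_ge d (d'+1) with hc | hc
    · exact Mem_mono_d τ (ih (by omega))
    · have : d = d' + 1 := by omega
      rwa [this] at h

/-- every canonical member is obtained from `range (m k)` by a strictly monotone map,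
together with the canonical children structure. -/
lemma Mem_children {k d : ℕ} {S : Finset ℕ} (h : S ∈ Mem τ (k+1) d) :
    ∃ g : ℕ → ℕ, StrictMono g ∧ S = (Finset.range (τ.m (k+1))).image g ∧
      ∀ i < τ.n (k+1), (Finset.range (τ.m k)).image (g ∘ emb τ k i) ∈ Mem τ k (d+1) := by
  induction d generalizing S with
  | zero =>
    refine ⟨id, strictMono_id, by simpa using (show S = Finset.range (τ.m (k+1)) from h), ?_⟩
    intro i hi
    refine ⟨i, by simpa using hi, Finset.range (τ.m k), range_mem τ k, ?_⟩
    simp [Function.comp]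
  | succ d ih =>
    obtain ⟨j, hj, T, hT, rfl⟩ := h
    obtain ⟨g, hg, hTg, hch⟩ := ih hT
    have e : k + (d+1) = k + 1 + d := by omega
    have hj' : j < τ.n (k + (d+1) + 1) := by rw [show k+(d+1)+1 = k+1+d+1 by omega]; exact hj
    refine ⟨emb τ (k+1+d) j ∘ g, (emb_strictMono τ _ j).comp hg, ?_, ?_⟩
    · rw [hTg, Finset.image_image]
    · intro i hi
      refine ⟨j, hj', (Finset.range (τ.m k)).image (g ∘ emb τ k i), hch i hi, ?_⟩
      rw [Finset.image_image, e]
      rfl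

/-- every canonical member of level `k` at depth `d+1` is a canonical child of a
canonical member of level `k+1`. -/
lemma Mem_parent {k d : ℕ} {S : Finset ℕ} (h : S ∈ Mem τ k (d+1)) :
    ∃ T ∈ Mem τ (k+1) d, ∃ g : ℕ → ℕ, StrictMono g ∧
      T = (Finset.range (τ.m (k+1))).image g ∧
      ∃ i < τ.n (k+1), S = (Finset.range (τ.m k)).image (g ∘ emb τ k i) := by
  induction d generalizing S with
  | zero =>
    obtain ⟨i, hi, T, hT, rfl⟩ := h
    refine ⟨Finset.range (τ.m (k+1)), range_mem τ _, id, strictMono_id, by simp, i,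
      by simpa using hi, ?_⟩
    rw [show T = Finset.range (τ.m k) from hT]
    simp [Function.comp]
  | succ d ih =>
    obtain ⟨j, hj, T, hT, rfl⟩ := h
    obtain ⟨U, hU, g, hg, hUg, i, hi, hS⟩ := ih hT
    have e : k + (d+1) = k + 1 + d := by omega
    have hj' : j < τ.n (k + 1 + d + 1) := by rw [show k+1+d+1 = k+(d+1)+1 by omega]; exact hj
    refine ⟨U.image (emb τ (k+1+d) j), ⟨j, hj', U, hU, rfl⟩,
      emb τ (k+1+d) j ∘ g, (emb_strictMono τ _ j).comp hg, ?_, i, hi, ?_⟩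
    · rw [hUg, Finset.image_image]
    · rw [hS, Finset.image_image, e]
      rfl


lemma emb_image_inter {k i j : ℕ} (hij : i ≠ j) :
    (Finset.range (τ.m k)).image (emb τ k i) ∩ (Finset.range (τ.m k)).image (emb τ k j)
      = Finset.range (τ.r (k+1)) := by
  ext x
  simp only [Finset.mem_inter, Finset.mem_image, Finset.mem_range]
  constructor
  · rintro ⟨⟨y, hy, rfl⟩, ⟨z, hz, hzx⟩⟩
    obtain ⟨h1, h2⟩ := emb_inter_aux τ (Ne.symm hij) hz hy hzx
    rw [← h2] at *
    rwa [emb_of_lt τ h1]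
  · intro hx
    have hxm : x < τ.m k := lt_trans hx (τ.r_lt_m k)
    exact ⟨⟨x, hxm, emb_of_lt τ hx⟩, ⟨x, hxm, emb_of_lt τ hx⟩⟩

lemma emb_image_range (k i : ℕ) :
    (Finset.range (τ.m k)).image (emb τ k i) =
      Finset.range (τ.r (k+1)) ∪
        Finset.Ico (τ.r (k+1) + i * (τ.m k - τ.r (k+1)))
          (τ.r (k+1) + (i+1) * (τ.m k - τ.r (k+1))) := by
  have hr := τ.r_lt_m k
  have hmul : (i+1) * (τ.m k - τ.r (k+1)) = i * (τ.m k - τ.r (k+1)) + (τ.m k - τ.r (k+1)) := by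
    rw [Nat.add_mul]; omega
  ext x
  simp only [Finset.mem_image, Finset.mem_range, Finset.mem_union, Finset.mem_Ico]
  constructor
  · rintro ⟨y, hy, rfl⟩
    rcases lt_or_ge y (τ.r (k+1)) with h | h
    · left; rwa [emb_of_lt τ h]
    · right; exact (emb_mem_block τ h hy)
  · rintro (h | h)
    · exact ⟨x, by omega, emb_of_lt τ h⟩
    · refine ⟨x - i * (τ.m k - τ.r (k+1)), by omega, ?_⟩
      rw [emb_of_ge τ (by omega)]
      omega

/-- same-level canonical members: intersections are initial segments -/
lemma Mem_initSeg {k d : ℕ} {A B : Finset ℕ} (hA : A ∈ Mem τ k d) (hB : B ∈ Mem τ k d) :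
    ∀ b ∈ A, ∀ a ∈ A ∩ B, b ≤ a → b ∈ A ∩ B := by
  induction d generalizing A B with
  | zero =>
    rw [show A = Finset.range (τ.m k) from hA, show B = Finset.range (τ.m k) from hB]
    intro b hb a ha hba
    simpa using hb
  | succ d ih =>
    obtain ⟨i, hi, A', hA', rfl⟩ := hA
    obtain ⟨j, hj, B', hB', rfl⟩ := hB
    rcases eq_or_ne i j with rfl | hij
    · intro b hb a ha hba
      rw [← Finset.image_inter _ _ (emb_injective τ (k+d) i)] at ha ⊢
      rw [Finset.mem_image] at hb ha
      obtain ⟨x, hx, rfl⟩ := hb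
      obtain ⟨y, hy, rfl⟩ := ha
      have hxy : x ≤ y := (emb_strictMono τ (k+d) i).le_iff_le.mp hba
      exact Finset.mem_image_of_mem _ (ih hA' hB' x hx y hy hxy)
    · intro b hb a ha hba
      rw [Finset.mem_inter, Finset.mem_image, Finset.mem_image] at ha
      obtain ⟨⟨y, hy, rfl⟩, ⟨z, hz, hzy⟩⟩ := ha
      have hym := Finset.mem_range.mp (Mem_subset_range τ hA' hy)
      have hzm := Finset.mem_range.mp (Mem_subset_range τ hB' hz)
      obtain ⟨hzr, rfl⟩ := emb_inter_aux τ (Ne.symm hij) hzm hym hzy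
      rw [emb_of_lt τ hzr] at hba
      rw [Finset.mem_image] at hb
      obtain ⟨x, hx, rfl⟩ := hb
      have hxr : x < τ.r (k+d+1) := by
        have := emb_lt_r_iff τ (k := k+d) (i := i) (x := x)
        omega
      have hmem := ih hA' hB' x hx z (Finset.mem_inter.mpr ⟨hy, hz⟩)
        (by rw [emb_of_lt τ hxr] at hba; exact hba)
      rw [Finset.mem_inter] at hmem
      rw [Finset.mem_inter]
      constructor
      · exact Finset.mem_image_of_mem _ hmem.1
      · have hxx : emb τ (k+d) i x = emb τ (k+d) j x := by
          rw [emb_of_lt τ hxr, emb_of_lt τ hxr]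
        rw [hxx]
        exact Finset.mem_image_of_mem _ hmem.2


/-! ### the ordinal side -/

noncomputable def castF (A : Finset ℕ) : Finset Ordinal := A.image (Nat.cast)

lemma castInj : Function.Injective (Nat.cast : ℕ → Ordinal) := Nat.cast_injective

lemma castF_card (A : Finset ℕ) : (castF A).card = A.card :=
  Finset.card_image_of_injective _ castInj

lemma castF_inter (A B : Finset ℕ) : castF (A ∩ B) = castF A ∩ castF B :=
  Finset.image_inter _ _ castInj

lemma castF_subset {A B : Finset ℕ} : castF A ⊆ castF B ↔ A ⊆ B :=
  Finset.image_subset_image_iff castInj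

lemma mem_castF {A : Finset ℕ} {o : Ordinal} :
    o ∈ castF A ↔ ∃ a ∈ A, (a : Ordinal) = o := Finset.mem_image

/-- the canonical construction scheme over `ω` -/
def schemeF : Set (Finset Ordinal) :=
  {F | ∃ k d A, A ∈ Mem τ k d ∧ F = castF A}

lemma level_schemeF {k : ℕ} {F : Finset Ordinal} :
    F ∈ Level τ (schemeF τ) k ↔ ∃ d A, A ∈ Mem τ k d ∧ F = castF A := by
  constructor
  · rintro ⟨⟨k', d, A, hA, rfl⟩, hcard⟩
    rw [castF_card, Mem_card τ hA] at hcard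
    rw [m_inj τ hcard] at hA
    exact ⟨d, A, hA, rfl⟩
  · rintro ⟨d, A, hA, rfl⟩
    exact ⟨⟨k, d, A, hA, rfl⟩, by rw [castF_card, Mem_card τ hA]⟩

lemma initSeg_transfer {A B : Finset ℕ}
    (h : ∀ b ∈ A, ∀ a ∈ A ∩ B, b ≤ a → b ∈ A ∩ B) :
    ∀ b ∈ castF A, ∀ a ∈ castF A ∩ castF B, b ≤ a → b ∈ castF A ∩ castF B := by
  intro b hb a ha hba
  rw [← castF_inter] at ha ⊢
  obtain ⟨x, hx, rfl⟩ := mem_castF.mp hb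
  obtain ⟨y, hy, rfl⟩ := mem_castF.mp ha
  exact mem_castF.mpr ⟨x, h x hx y hy (Nat.cast_le.mp hba), rfl⟩

theorem schemeF_isScheme : IsConstructionScheme τ (Set.Iio Ordinal.omega0) (schemeF τ) := by
  classical
  refine ⟨?_, ?_, ?_, ?_⟩
  · rintro F ⟨k, d, A, hA, rfl⟩
    refine ⟨Finset.card_pos.mp ?_, ?_, k, by rw [castF_card, Mem_card τ hA]⟩
    · rw [castF_card, Mem_card τ hA]; exact m_pos τ k
    · intro o ho
      obtain ⟨a, _, rfl⟩ := mem_castF.mp (Finset.mem_coe.mp ho)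
      exact Ordinal.nat_lt_omega0 a
  · intro A hA
    have hAr : ∀ o ∈ A, o ∈ Set.range (Nat.cast : ℕ → Ordinal) := by
      intro o ho
      obtain ⟨n, rfl⟩ := Ordinal.lt_omega0.mp (hA (Finset.mem_coe.mpr ho))
      exact ⟨n, rfl⟩
    set B := A.preimage (Nat.cast : ℕ → Ordinal) (Set.injOn_of_injective castInj) with hB
    have hAB : A = castF B := by
      rw [hB, castF, Finset.image_preimage]
      ext o
      simp only [Finset.mem_filter]
      exact ⟨fun ho => ⟨ho, hAr o ho⟩, fun h => h.1⟩
    refine ⟨castF (Finset.range (τ.m (B.sup id))), ⟨B.sup id, 0, _, range_mem τ _, rfl⟩, ?_⟩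
    rw [hAB]
    rw [castF_subset]
    intro b hb
    rw [Finset.mem_range]
    exact lt_of_le_of_lt (Finset.le_sup (f := id) hb) (lt_m τ _)
  · intro k E hE F hF
    obtain ⟨dA, A, hA, rfl⟩ := (level_schemeF τ).mp hE
    obtain ⟨dB, B, hB, rfl⟩ := (level_schemeF τ).mp hF
    have hA' := Mem_mono_d' τ (Nat.le_max_left dA dB) hA
    have hB' := Mem_mono_d' τ (Nat.le_max_right dA dB) hB
    constructor
    · exact initSeg_transfer (Mem_initSeg τ hA' hB')
    · intro b hb a ha hba
      rw [Finset.inter_comm] at ha ⊢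
      exact initSeg_transfer (Mem_initSeg τ hB' hA') b hb a ha hba
  · intro k F hF
    obtain ⟨d, S, hS, rfl⟩ := (level_schemeF τ).mp hF
    obtain ⟨g, hg, hSg, hch⟩ := Mem_children τ hS
    refine ⟨fun i => castF ((Finset.range (τ.m k)).image (g ∘ emb τ k i.val)),
      castF ((Finset.range (τ.r (k+1))).image g), ?_, ?_, ?_, ?_, ?_, ?_⟩
    · intro i
      exact (level_schemeF τ).mpr ⟨d+1, _, hch i.val i.isLt, rfl⟩
    · rw [hSg]
      ext o
      simp only [Set.mem_iUnion, Finset.mem_coe, castF, Finset.mem_image, Finset.mem_range,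
        Function.comp_apply]
      constructor
      · rintro ⟨x, ⟨y, hy, rfl⟩, rfl⟩
        obtain ⟨i, hi, z, hz, rfl⟩ := emb_cover τ hy
        exact ⟨⟨i, hi⟩, g (emb τ k i z), ⟨z, hz, rfl⟩, rfl⟩
      · rintro ⟨i, x, ⟨z, hz, rfl⟩, rfl⟩
        exact ⟨g (emb τ k i.val z), ⟨emb τ k i.val z, emb_lt_m_succ τ i.isLt hz, rfl⟩, rfl⟩
    · rw [castF_card, Finset.card_image_of_injective _ hg.injective, Finset.card_range]
    · intro i j hij
      have hij' : (i : ℕ) ≠ (j : ℕ) := fun h => hij (Fin.ext h)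
      rw [← castF_inter]
      congr 1
      rw [← Finset.image_image, ← Finset.image_image (g := g),
        ← Finset.image_inter _ _ hg.injective, emb_image_inter τ hij']
    · intro i a ha b hb hbR
      obtain ⟨x, hx, rfl⟩ := mem_castF.mp ha
      obtain ⟨y, hy, rfl⟩ := mem_castF.mp hb
      rw [Finset.mem_image] at hx hy
      obtain ⟨x', hx', rfl⟩ := hx
      obtain ⟨y', hy', rfl⟩ := hy
      rw [Finset.mem_range] at hx'
      have hyr : τ.r (k+1) ≤ emb τ k i.val y' := by
        by_contra hc
        push_neg at hc
        exact hbR (mem_castF.mpr ⟨g (emb τ k i.val y'),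
          Finset.mem_image_of_mem g (Finset.mem_range.mpr hc), rfl⟩)
      exact Nat.cast_lt.mpr (hg (by omega))
    · intro i j hij a ha haR b hb hbR
      obtain ⟨x, hx, rfl⟩ := mem_castF.mp ha
      obtain ⟨y, hy, rfl⟩ := mem_castF.mp hb
      rw [Finset.mem_image] at hx hy
      obtain ⟨x', hx', rfl⟩ := hx
      obtain ⟨y', hy', rfl⟩ := hy
      rw [Function.comp_apply] at *
      rw [Finset.mem_range] at hx' hy'
      have hxr : τ.r (k+1) ≤ x' := by
        by_contra hc
        push_neg at hc
        refine haR (mem_castF.mpr ⟨g (emb τ k i.val x'), Finset.mem_image_of_mem g ?_, rfl⟩)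
        rw [Finset.mem_range, emb_of_lt τ hc]
        exact hc
      have hyr : τ.r (k+1) ≤ y' := by
        by_contra hc
        push_neg at hc
        refine hbR (mem_castF.mpr ⟨g (emb τ k j.val y'), Finset.mem_image_of_mem g ?_, rfl⟩)
        rw [Finset.mem_range, emb_of_lt τ hc]
        exact hc
      exact Nat.cast_lt.mpr (hg (emb_block_lt τ hij hxr hx' hyr))


lemma castF_union (A B : Finset ℕ) : castF (A ∪ B) = castF A ∪ castF B :=
  Finset.image_union _ _

lemma castF_sdiff (A B : Finset ℕ) : castF (A \ B) = castF A \ castF B :=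
  Finset.image_sdiff _ _ castInj

lemma range_sdiff_range (a b : ℕ) : Finset.range b \ Finset.range a = Finset.Ico a b := by
  ext x
  simp only [Finset.mem_sdiff, Finset.mem_range, Finset.mem_Ico]
  omega

lemma least_block {g : ℕ → ℕ} (hg : StrictMono g) {M c : ℕ} (hc : c ≤ M)
    {F A : Finset Ordinal} (hF : F = castF ((Finset.range M).image g))
    (hA : A ⊆ F) (hcard : A.card = c)
    (hlt : ∀ a ∈ A, ∀ b ∈ F, b ∉ A → a < b) :
    A = castF ((Finset.range c).image g) := by
  have hCF : castF ((Finset.range c).image g) ⊆ F := by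
    rw [hF]
    exact castF_subset.mpr (Finset.image_subset_image (Finset.range_subset_range.mpr hc))
  have hCA : castF ((Finset.range c).image g) ⊆ A := by
    intro x hx
    by_contra hxA
    obtain ⟨y, hy, rfl⟩ := mem_castF.mp hx
    rw [Finset.mem_image] at hy
    obtain ⟨t, ht, rfl⟩ := hy
    rw [Finset.mem_range] at ht
    have hsub2 : A ⊆ castF ((Finset.range t).image g) := by
      intro a ha
      have haF := hA ha
      rw [hF] at haF
      obtain ⟨v, hv, rfl⟩ := mem_castF.mp haF
      rw [Finset.mem_image] at hv
      obtain ⟨u, _, rfl⟩ := hv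
      have hlt2 : ((g u : ℕ) : Ordinal) < ((g t : ℕ) : Ordinal) :=
        hlt _ ha _ (hCF hx) hxA
      exact mem_castF.mpr ⟨g u, Finset.mem_image_of_mem g
        (Finset.mem_range.mpr (hg.lt_iff_lt.mp (Nat.cast_lt.mp hlt2))), rfl⟩
    have hle : A.card ≤ t := by
      calc A.card ≤ (castF ((Finset.range t).image g)).card := Finset.card_le_card hsub2
        _ = t := by
          rw [castF_card, Finset.card_image_of_injective _ hg.injective, Finset.card_range]
    omega
  have hCc : (castF ((Finset.range c).image g)).card = c := by
    rw [castF_card, Finset.card_image_of_injective _ hg.injective, Finset.card_range]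
  exact (Finset.eq_of_subset_of_card_le hCA (by omega)).symm

lemma decomp_shape {l : ℕ} {g : ℕ → ℕ} (hg : StrictMono g) {F : Finset Ordinal}
    (hFg : F = castF ((Finset.range (τ.m (l+1))).image g))
    {Fi : Fin (τ.n (l+1)) → Finset Ordinal} {R : Finset Ordinal}
    (hlev : ∀ i, (Fi i).card = τ.m l)
    (hun : (↑F : Set Ordinal) = ⋃ i, ↑(Fi i))
    (hR : R.card = τ.r (l+1))
    (hint : ∀ i j, i ≠ j → Fi i ∩ Fi j = R)
    (hroot : ∀ i, ∀ a ∈ R, ∀ b ∈ Fi i, b ∉ R → a < b)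
    (htails : ∀ i j : Fin (τ.n (l+1)), i < j → ∀ a ∈ Fi i, a ∉ R → ∀ b ∈ Fi j, b ∉ R → a < b) :
    ∀ i, Fi i = castF ((Finset.range (τ.m l)).image (g ∘ emb τ l i.val)) := by
  classical
  have hn := τ.two_le_n l
  have hr := τ.r_lt_m l
  have hms := τ.m_succ l
  have hRsub : ∀ i, R ⊆ Fi i := by
    intro i
    have : ∃ j : Fin (τ.n (l+1)), j ≠ i := by
      rcases eq_or_ne i ⟨0, by omega⟩ with rfl | h
      · exact ⟨⟨1, by omega⟩, by simp [Fin.ext_iff]⟩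
      · exact ⟨⟨0, by omega⟩, Ne.symm h⟩
    obtain ⟨j, hj⟩ := this
    rw [← hint i j (Ne.symm hj)]
    exact Finset.inter_subset_left
  have hFisub : ∀ i, Fi i ⊆ F := by
    intro i x hx
    have : (x : Ordinal) ∈ (↑F : Set Ordinal) := by
      rw [hun]; exact Set.mem_iUnion.mpr ⟨i, hx⟩
    exact this
  have hFun : ∀ x ∈ F, ∃ i, x ∈ Fi i := by
    intro x hx
    have : (x : Ordinal) ∈ ⋃ i, (↑(Fi i) : Set Ordinal) := by rw [← hun]; exact hx
    obtain ⟨i, hi⟩ := Set.mem_iUnion.mp this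
    exact ⟨i, hi⟩
  set U : ℕ → Finset Ordinal :=
    fun j => R ∪ (Finset.univ.filter (fun i : Fin (τ.n (l+1)) => (i : ℕ) < j)).biUnion Fi
    with hU
  have hU0 : U 0 = R := by simp [hU]
  have hUsucc : ∀ j : Fin (τ.n (l+1)), U ((j : ℕ)+1) = U (j : ℕ) ∪ Fi j := by
    intro j
    ext x
    simp only [hU, Finset.mem_union, Finset.mem_biUnion, Finset.mem_filter, Finset.mem_univ,
      true_and]
    constructor
    · rintro (h | ⟨i, hi, hxi⟩)
      · exact Or.inl (Or.inl h)
      · rcases Nat.lt_or_ge (i : ℕ) (j : ℕ) with hc | hc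
        · exact Or.inl (Or.inr ⟨i, hc, hxi⟩)
        · have : i = j := Fin.ext (by omega)
          exact Or.inr (this ▸ hxi)
    · rintro ((h | ⟨i, hi, hxi⟩) | h)
      · exact Or.inl h
      · exact Or.inr ⟨i, by omega, hxi⟩
      · exact Or.inr ⟨j, by omega, h⟩
  have hUF : ∀ j, U j ⊆ F := by
    intro j
    refine Finset.union_subset ?_ (Finset.biUnion_subset.mpr fun i _ => hFisub i)
    exact (hRsub ⟨0, by omega⟩).trans (hFisub _)
  have hsubU : ∀ (j : ℕ) (i : Fin (τ.n (l+1))), (i : ℕ) < j → Fi i ⊆ U j := by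
    intro j i hij x hx
    exact Finset.mem_union_right _ (Finset.mem_biUnion.mpr
      ⟨i, Finset.mem_filter.mpr ⟨Finset.mem_univ i, hij⟩, hx⟩)
  have hFiU : ∀ j : Fin (τ.n (l+1)), Fi j ∩ U (j : ℕ) = R := by
    intro j
    ext x
    simp only [hU, Finset.mem_inter, Finset.mem_union, Finset.mem_biUnion, Finset.mem_filter,
      Finset.mem_univ, true_and]
    constructor
    · rintro ⟨hxj, (h | ⟨i, hi, hxi⟩)⟩
      · exact h
      · have hij : i ≠ j := by
          intro e; rw [e] at hi; omega
        rw [← hint i j hij]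
        exact Finset.mem_inter.mpr ⟨hxi, hxj⟩
    · intro h
      exact ⟨hRsub j h, Or.inl h⟩
  have main : ∀ j, j ≤ τ.n (l+1) →
      U j = castF ((Finset.range (τ.r (l+1) + j * (τ.m l - τ.r (l+1)))).image g) := by
    intro j
    induction j with
    | zero =>
      intro _
      rw [hU0, Nat.zero_mul, Nat.add_zero]
      refine least_block hg (by omega) hFg ((hU0 ▸ hUF 0)) hR ?_
      intro a ha b hb hbA
      obtain ⟨i, hbi⟩ := hFun b hb
      exact hroot i a ha b hbi hbA
    | succ j ihj =>
      intro hj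
      have hjn : j < τ.n (l+1) := by omega
      have hUj := ihj (by omega)
      have hstep : U (j+1) = U j ∪ Fi ⟨j, hjn⟩ := hUsucc ⟨j, hjn⟩
      have hintU : U j ∩ Fi ⟨j, hjn⟩ = R := by
        rw [Finset.inter_comm]; exact hFiU ⟨j, hjn⟩
      have hcardUj : (U j).card = τ.r (l+1) + j * (τ.m l - τ.r (l+1)) := by
        rw [hUj, castF_card, Finset.card_image_of_injective _ hg.injective, Finset.card_range]
      have hcardU : (U (j+1)).card = τ.r (l+1) + (j+1) * (τ.m l - τ.r (l+1)) := by
        have h1 := Finset.card_union_add_card_inter (U j) (Fi ⟨j, hjn⟩)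
        rw [hintU, hR, hcardUj, hlev ⟨j, hjn⟩] at h1
        have h2 : (j+1) * (τ.m l - τ.r (l+1)) = j * (τ.m l - τ.r (l+1)) + (τ.m l - τ.r (l+1)) := by
          rw [Nat.add_mul]; omega
        rw [hstep]
        omega
      have hc : τ.r (l+1) + (j+1) * (τ.m l - τ.r (l+1)) ≤ τ.m (l+1) := by
        have h3 : (j+1) * (τ.m l - τ.r (l+1)) ≤ τ.n (l+1) * (τ.m l - τ.r (l+1)) :=
          Nat.mul_le_mul_right _ hj
        have h4 : τ.n (l+1) * (τ.m l - τ.r (l+1)) = (τ.m l - τ.r (l+1)) * τ.n (l+1) :=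
          Nat.mul_comm _ _
        omega
      refine least_block hg hc hFg (hUF (j+1)) hcardU ?_
      intro a ha b hb hbA
      obtain ⟨i, hbi⟩ := hFun b hb
      have hij : j < (i : ℕ) := by
        by_contra hc2
        exact hbA (hsubU (j+1) i (by omega) hbi)
      have hbR : b ∉ R := fun h => hbA (Finset.mem_union_left _ h)
      have haU := ha
      rw [hU] at haU
      rcases Finset.mem_union.mp haU with haR | haB
      · exact hroot i a haR b hbi hbR
      · obtain ⟨i', hi', hai'⟩ := Finset.mem_biUnion.mp haB
        rw [Finset.mem_filter] at hi'
        by_cases haR : a ∈ R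
        · exact hroot i a haR b hbi hbR
        · have hii : i' < i := by
            rw [Fin.lt_def]; omega
          exact htails i' i hii a hai' haR b hbi hbR
  -- extraction
  intro i
  have h1 := main (i : ℕ) (le_of_lt i.isLt)
  have h2 := main ((i : ℕ)+1) i.isLt
  have hstep : U ((i : ℕ)+1) = U (i : ℕ) ∪ Fi i := hUsucc i
  have hR0 : R = castF ((Finset.range (τ.r (l+1))).image g) := by
    have h0 := main 0 (by omega)
    rw [hU0, Nat.zero_mul, Nat.add_zero] at h0
    exact h0
  have hFiEq : Fi i = R ∪ (U ((i : ℕ)+1) \ U (i : ℕ)) := by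
    ext x
    constructor
    · intro hx
      by_cases hxU : x ∈ U (i : ℕ)
      · exact Finset.mem_union_left _ ((hFiU i) ▸ Finset.mem_inter.mpr ⟨hx, hxU⟩)
      · exact Finset.mem_union_right _ (Finset.mem_sdiff.mpr
          ⟨hstep ▸ Finset.mem_union_right _ hx, hxU⟩)
    · intro hx
      rcases Finset.mem_union.mp hx with hxR | hxD
      · exact hRsub i hxR
      · obtain ⟨hx1, hx2⟩ := Finset.mem_sdiff.mp hxD
        rw [hstep] at hx1
        rcases Finset.mem_union.mp hx1 with h | h
        · exact absurd h hx2
        · exact h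
  have key : (Finset.range (τ.r (l+1))).image g ∪
      ((Finset.range (τ.r (l+1) + ((i : ℕ)+1) * (τ.m l - τ.r (l+1)))).image g \
        (Finset.range (τ.r (l+1) + (i : ℕ) * (τ.m l - τ.r (l+1)))).image g) =
      (Finset.range (τ.m l)).image (g ∘ emb τ l (i : ℕ)) := by
    rw [← Finset.image_sdiff _ _ hg.injective, range_sdiff_range, ← Finset.image_union,
      ← emb_image_range τ l (i : ℕ), Finset.image_image]
  rw [hFiEq, hR0, h1, h2, ← castF_sdiff, ← castF_union, key]


/-! ### uniqueness -/

variable {τ}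

lemma level_card {𝓖 : Set (Finset Ordinal)}
    (h𝓖 : IsConstructionScheme τ (Set.Iio Ordinal.omega0) 𝓖) {G : Finset Ordinal}
    (hG : G ∈ 𝓖) : ∃ k, G ∈ Level τ 𝓖 k := by
  obtain ⟨-, -, k, hk⟩ := h𝓖.1 G hG
  exact ⟨k, hG, hk⟩

lemma cross_init {𝓖 : Set (Finset Ordinal)}
    (h𝓖 : IsConstructionScheme τ (Set.Iio Ordinal.omega0) 𝓖) {k l : ℕ} (hkl : k ≤ l)
    {E : Finset Ordinal} (hE : E ∈ Level τ 𝓖 k) :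
    ∀ F ∈ Level τ 𝓖 l, ∀ b ∈ E, ∀ a ∈ E, a ∈ F → b ≤ a → b ∈ F := by
  induction l, hkl using Nat.le_induction with
  | base =>
    intro F hF b hb a ha haF hba
    exact (Finset.mem_inter.mp
      ((h𝓖.2.2.1 k E hE F hF).1 b hb a (Finset.mem_inter.mpr ⟨ha, haF⟩) hba)).2
  | succ l hkl ih =>
    intro F hF b hb a ha haF hba
    obtain ⟨Fi, R, hlev, hun, -, -, -, -⟩ := h𝓖.2.2.2 l F hF
    have haU : (a : Ordinal) ∈ (↑F : Set Ordinal) := haF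
    rw [hun] at haU
    obtain ⟨i, hai⟩ := Set.mem_iUnion.mp haU
    have hbi : b ∈ Fi i := ih (Fi i) (hlev i) b hb a ha hai hba
    have hsub : (↑(Fi i) : Set Ordinal) ⊆ ↑F := by
      rw [hun]; exact Set.subset_iUnion (fun i => (↑(Fi i) : Set Ordinal)) i
    exact hsub hbi

lemma subset_piece {𝓖 : Set (Finset Ordinal)}
    (h𝓖 : IsConstructionScheme τ (Set.Iio Ordinal.omega0) 𝓖) {k l : ℕ} (hkl : k ≤ l)
    {E F : Finset Ordinal} (hE : E ∈ Level τ 𝓖 k) {N : ℕ} (hN : 0 < N)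
    {Fi : Fin N → Finset Ordinal} (hlev : ∀ i, Fi i ∈ Level τ 𝓖 l)
    (hun : (↑F : Set Ordinal) = ⋃ i, ↑(Fi i)) (hEF : E ⊆ F) :
    ∃ i, E ⊆ Fi i := by
  classical
  have hcomp : ∀ i j : Fin N, E ∩ Fi i ⊆ E ∩ Fi j ∨ E ∩ Fi j ⊆ E ∩ Fi i := by
    intro i j
    by_contra hcon
    push_neg at hcon
    obtain ⟨h1, h2⟩ := hcon
    obtain ⟨x, hx, hx2⟩ := Finset.not_subset.mp h1
    obtain ⟨y, hy, hy2⟩ := Finset.not_subset.mp h2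
    rw [Finset.mem_inter] at hx hy
    have hxj : x ∉ Fi j := fun h => hx2 (Finset.mem_inter.mpr ⟨hx.1, h⟩)
    have hyi : y ∉ Fi i := fun h => hy2 (Finset.mem_inter.mpr ⟨hy.1, h⟩)
    rcases le_total x y with hxy | hyx
    · exact hxj (cross_init h𝓖 hkl hE (Fi j) (hlev j) x hx.1 y hy.1 hy.2 hxy)
    · exact hyi (cross_init h𝓖 hkl hE (Fi i) (hlev i) y hy.1 x hx.1 hx.2 hyx)
  have hne : (Finset.univ : Finset (Fin N)).Nonempty := ⟨⟨0, hN⟩, Finset.mem_univ _⟩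
  obtain ⟨i0, -, hmax⟩ := Finset.exists_max_image Finset.univ
    (fun i => (E ∩ Fi i).card) hne
  refine ⟨i0, fun e he => ?_⟩
  have heF : (e : Ordinal) ∈ (↑F : Set Ordinal) := hEF he
  rw [hun] at heF
  obtain ⟨i, hei⟩ := Set.mem_iUnion.mp heF
  have hsub : E ∩ Fi i ⊆ E ∩ Fi i0 := by
    rcases hcomp i i0 with h | h
    · exact h
    · rw [Finset.eq_of_subset_of_card_le h (hmax i (Finset.mem_univ i))]
  exact (Finset.mem_inter.mp (hsub (Finset.mem_inter.mpr ⟨he, hei⟩))).2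

lemma downward_closed {N : ℕ} {x b : Ordinal} (hx : x ∈ castF (Finset.range N))
    (hb : b < x) (hbw : b < Ordinal.omega0) : b ∈ castF (Finset.range N) := by
  obtain ⟨t, ht, rfl⟩ := mem_castF.mp hx
  obtain ⟨u, rfl⟩ := Ordinal.lt_omega0.mp hbw
  rw [Finset.mem_range] at ht
  exact mem_castF.mpr ⟨u, Finset.mem_range.mpr (lt_trans (Nat.cast_lt.mp hb) ht), rfl⟩

lemma initial_mem {𝓖 : Set (Finset Ordinal)}
    (h𝓖 : IsConstructionScheme τ (Set.Iio Ordinal.omega0) 𝓖) (l : ℕ) :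
    castF (Finset.range (τ.m l)) ∈ Level τ 𝓖 l := by
  have hsubω : (↑(castF (Finset.range (τ.m l))) : Set Ordinal) ⊆ Set.Iio Ordinal.omega0 := by
    intro o ho
    obtain ⟨a, -, rfl⟩ := mem_castF.mp (Finset.mem_coe.mp ho)
    exact Ordinal.nat_lt_omega0 a
  obtain ⟨G, hG, hsub⟩ := h𝓖.2.1 _ hsubω
  obtain ⟨p, hGp⟩ := level_card h𝓖 hG
  have hcardK : (castF (Finset.range (τ.m l))).card = τ.m l := by
    rw [castF_card, Finset.card_range]
  have hlp : l ≤ p := by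
    rw [← m_le_iff τ]
    calc τ.m l = (castF (Finset.range (τ.m l))).card := hcardK.symm
      _ ≤ G.card := Finset.card_le_card hsub
      _ = τ.m p := hGp.2
  clear hG
  induction p using Nat.strong_induction_on generalizing G with
  | _ p ih =>
    rcases eq_or_lt_of_le hlp with rfl | hlt
    · have : castF (Finset.range (τ.m l)) = G :=
        Finset.eq_of_subset_of_card_le hsub (le_of_eq (by rw [hGp.2, hcardK]))
      rw [this]
      exact hGp
    · obtain ⟨q, rfl⟩ : ∃ q, p = q + 1 := ⟨p - 1, by omega⟩
      have hn := τ.two_le_n q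
      obtain ⟨Fi, R, hlev, hun, hR, hint, hroot, htails⟩ := h𝓖.2.2.2 q G hGp
      set i0 : Fin (τ.n (q+1)) := ⟨0, by omega⟩ with hi0
      have hsubF : ∀ i, Fi i ⊆ G := by
        intro i x hx
        have : (x : Ordinal) ∈ (↑G : Set Ordinal) := by
          rw [hun]; exact Set.mem_iUnion.mpr ⟨i, hx⟩
        exact this
      by_cases hc : castF (Finset.range (τ.m l)) ⊆ Fi i0
      · exact ih q (by omega) (Fi i0) hc (hlev i0) (by
          rw [← m_le_iff τ]
          calc τ.m l = _ := hcardK.symm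
            _ ≤ (Fi i0).card := Finset.card_le_card hc
            _ = τ.m q := (hlev i0).2)
      · obtain ⟨x, hxK, hx0⟩ := Finset.not_subset.mp hc
        have hxG : x ∈ G := hsub hxK
        have : (x : Ordinal) ∈ ⋃ i, (↑(Fi i) : Set Ordinal) := by rw [← hun]; exact hxG
        obtain ⟨j, hxj⟩ := Set.mem_iUnion.mp this
        have hj0 : j ≠ i0 := fun h => hx0 (h ▸ hxj)
        have hj0' : i0 < j := by
          rw [Fin.lt_def]
          have h1 := Fin.ext_iff.not.mp hj0
          have hv : (i0 : ℕ) = 0 := rfl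
          omega
        have hxR : x ∉ R := by
          intro h
          rw [← hint i0 j (Ne.symm hj0)] at h
          exact hx0 (Finset.mem_inter.mp h).1
        have hFi0 : Fi i0 ⊆ castF (Finset.range (τ.m l)) := by
          intro b hb
          have hbx : b < x := by
            by_cases hbR : b ∈ R
            · exact hroot j b hbR x hxj hxR
            · exact htails i0 j hj0' b hb hbR x hxj hxR
          have hbw : b < Ordinal.omega0 := by
            have := h𝓖.1 G hGp.1
            exact this.2.1 (Finset.mem_coe.mpr (hsubF i0 hb))
          exact downward_closed hxK hbx hbw
        have hql : q = l := by
          have h1 : τ.m q ≤ τ.m l := by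
            calc τ.m q = (Fi i0).card := (hlev i0).2.symm
              _ ≤ _ := Finset.card_le_card hFi0
              _ = τ.m l := hcardK
          have h3 := (m_le_iff τ).mp h1
          omega
        have : Fi i0 = castF (Finset.range (τ.m l)) :=
          Finset.eq_of_subset_of_card_le hFi0 (by rw [hcardK, (hlev i0).2, hql])
        rw [← this, ← hql]
        exact hlev i0

lemma canonical_of_sub {𝓖 : Set (Finset Ordinal)}
    (h𝓖 : IsConstructionScheme τ (Set.Iio Ordinal.omega0) 𝓖) (l : ℕ) :
    ∀ H ∈ Level τ 𝓖 l, (∃ d A, A ∈ Mem τ l d ∧ H = castF A) →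
    ∀ k ≤ l, ∀ G ∈ Level τ 𝓖 k, G ⊆ H → ∃ d' A', A' ∈ Mem τ k d' ∧ G = castF A' := by
  induction l with
  | zero =>
    intro H hH hHc k hk G hG hGH
    obtain ⟨d, A, hA, rfl⟩ := hHc
    interval_cases k
    have : G = castF A := Finset.eq_of_subset_of_card_le hGH (by rw [hG.2, castF_card, Mem_card τ hA])
    exact ⟨d, A, hA, this⟩
  | succ l ih =>
    intro H hH hHc k hk G hG hGH
    rcases eq_or_lt_of_le hk with rfl | hkl
    · obtain ⟨d, A, hA, rfl⟩ := hHc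
      exact ⟨d, A, hA, Finset.eq_of_subset_of_card_le hGH
        (by rw [hG.2, castF_card, Mem_card τ hA])⟩
    · obtain ⟨d, A, hA, rfl⟩ := hHc
      obtain ⟨g, hg, hAg, hch⟩ := Mem_children τ hA
      obtain ⟨Fi, R, hlev, hun, hR, hint, hroot, htails⟩ := h𝓖.2.2.2 l (castF A) hH
      have hshape := decomp_shape τ hg (by rw [hAg]) (fun i => (hlev i).2) hun hR hint hroot htails
      have hn := τ.two_le_n l
      obtain ⟨i, hGi⟩ := subset_piece h𝓖 (show k ≤ l by omega) hG (by omega) hlev hun hGH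
      exact ih (Fi i) (hlev i) ⟨d+1, _, hch i.val i.isLt, hshape i⟩ k (by omega) G hG hGi

lemma exists_nat_repr {G : Finset Ordinal} (h : (↑G : Set Ordinal) ⊆ Set.Iio Ordinal.omega0) :
    ∃ B : Finset ℕ, G = castF B := by
  classical
  have hGr : ∀ o ∈ G, o ∈ Set.range (Nat.cast : ℕ → Ordinal) := by
    intro o ho
    obtain ⟨n, rfl⟩ := Ordinal.lt_omega0.mp (h (Finset.mem_coe.mpr ho))
    exact ⟨n, rfl⟩
  refine ⟨G.preimage (Nat.cast : ℕ → Ordinal) (Set.injOn_of_injective castInj), ?_⟩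
  rw [castF, Finset.image_preimage]
  ext o
  simp only [Finset.mem_filter]
  exact ⟨fun ho => ⟨ho, hGr o ho⟩, fun h => h.1⟩

lemma scheme_sub_canonical {𝓖 : Set (Finset Ordinal)}
    (h𝓖 : IsConstructionScheme τ (Set.Iio Ordinal.omega0) 𝓖) :
    𝓖 ⊆ schemeF τ := by
  intro G hG
  obtain ⟨k, hGk⟩ := level_card h𝓖 hG
  obtain ⟨B, rfl⟩ := exists_nat_repr (h𝓖.1 G hG).2.1
  set L := max (B.sup id) k with hL
  have hBL : B ⊆ Finset.range (τ.m L) := by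
    intro b hb
    rw [Finset.mem_range]
    calc b ≤ B.sup id := Finset.le_sup (f := id) hb
      _ ≤ L := le_max_left _ _
      _ < τ.m L := lt_m τ L
  obtain ⟨d', A', hA', hGA⟩ := canonical_of_sub h𝓖 L (castF (Finset.range (τ.m L)))
    (initial_mem h𝓖 L) ⟨0, _, range_mem τ L, rfl⟩ k (le_max_right _ _) (castF B) hGk
    (castF_subset.mpr hBL)
  exact ⟨k, d', A', hA', hGA⟩

lemma canonical_sub_scheme {𝓖 : Set (Finset Ordinal)}
    (h𝓖 : IsConstructionScheme τ (Set.Iio Ordinal.omega0) 𝓖) :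
    schemeF τ ⊆ 𝓖 := by
  have main : ∀ d k A, A ∈ Mem τ k d → castF A ∈ 𝓖 := by
    intro d
    induction d with
    | zero =>
      intro k A hA
      rw [show A = Finset.range (τ.m k) from hA]
      exact (initial_mem h𝓖 k).1
    | succ d ih =>
      intro k A hA
      obtain ⟨T, hT, g, hg, hTg, i, hi, hAi⟩ := Mem_parent τ hA
      have hTlev : castF T ∈ Level τ 𝓖 (k+1) :=
        ⟨ih (k+1) T hT, by rw [castF_card, Mem_card τ hT]⟩
      obtain ⟨Fi, R, hlev, hun, hR, hint, hroot, htails⟩ := h𝓖.2.2.2 k (castF T) hTlev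
      have hshape := decomp_shape τ hg (by rw [hTg]) (fun j => (hlev j).2) hun hR hint hroot htails
      have := hshape ⟨i, hi⟩
      rw [← hAi] at this
      rw [← this]
      exact (hlev ⟨i, hi⟩).1
  rintro F ⟨k, d, A, hA, rfl⟩
  exact main d k A hA

theorem scheme_unique {𝓖 : Set (Finset Ordinal)}
    (h𝓖 : IsConstructionScheme τ (Set.Iio Ordinal.omega0) 𝓖) : 𝓖 = schemeF τ :=
  le_antisymm (scheme_sub_canonical h𝓖) (canonical_sub_scheme h𝓖)

end UniqueScheme

/-- For every good type there is exactly one construction scheme over `ω`, and it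
contains every initial segment `m_k` of `ω`. -/
theorem unique_scheme_over_omega (τ : SchemeType) (hτ : GoodType τ) :
    ∃ 𝓕 : Set (Finset Ordinal),
      IsConstructionScheme τ (Set.Iio Ordinal.omega0) 𝓕 ∧
      (∀ 𝓖 : Set (Finset Ordinal),
        IsConstructionScheme τ (Set.Iio Ordinal.omega0) 𝓖 → 𝓖 = 𝓕) ∧
      (∀ k : ℕ, (Finset.range (τ.m k)).image (Nat.cast : ℕ → Ordinal) ∈ 𝓕) := by
  refine ⟨UniqueScheme.schemeF τ, UniqueScheme.schemeF_isScheme τ,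
    fun 𝓖 h𝓖 => UniqueScheme.scheme_unique h𝓖,
    fun k => ⟨k, 0, _, UniqueScheme.range_mem τ k, rfl⟩⟩
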